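/- Let G and H be bisimplicial groups with horizontal faces/degeneracies d^h_i, s^h_i and vertical faces/degeneracies d^v_i, s^v_i, and let α, β : G → H be morphisms of bisimplicial groups. Suppose for every m ≥ 0 there is a vertical simplicial homotopy between the morphisms of simplicial groups α_{m,*}, β_{m,*} : G_{m,*} → H_{m,*}, i.e. group homomorphisms h^v_i : G_{m,n} → H_{m,n+1} (0 ≤ i ≤ n) satisfying d^v_0∘h^v_0 = α_{m,n}, d^v_{n+1}∘h^v_n = β_{m,n}, d^v_i∘h^v_j = h^v_{j-1}∘d^v_i for i < j, d^v_i∘h^v_j = h^v_j∘d^v_{i-1} for i > j+1, and d^v_{j+1}∘h^v_{j+1} = d^v_{j+1}∘h^v_j, and suppose in addition that d^h_j∘h^v_i = h^v_i∘d^h_j for all applicable indices. Then the homomorphisms h'_i := h^v_i∘s^h_i : G_{n,n} → H_{n+1,n+1} (0 ≤ i ≤ n) satisfy the same simplicial homotopy identities between the diagonal morphisms Δα, Δβ : ΔG → ΔH, i.e. Δα and Δβ are simplicially homotopic. -/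

import Mathlib

open CategoryTheory Simplicial Opposite

set_option maxHeartbeats 8000000 in
/-- Let `G, H` be bisimplicial groups (horizontal = outer index, vertical = inner index)
and `α, β : G ⟶ H` morphisms.  Given, for each `m`, a vertical simplicial homotopy
`hv m` between `α_{m,*}` and `β_{m,*}` which commutes with the horizontal faces
(`d^h_j ∘ h^v_i = h^v_i ∘ d^h_j`), the maps `h'ᵢ = h^v_i ∘ s^h_i : G_{n,n} → H_{n+1,n+1}`
satisfy the simplicial homotopy identities between the diagonal morphisms
`Δα, Δβ : ΔG → ΔH`; i.e. `Δα` and `Δβ` are simplicially homotopic. -/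
theorem diagonal_homotopy_of_vertical_homotopy
    (G H : SimplicialObject (SimplicialObject GrpCat)) (α β : G ⟶ H)
    (hv : ∀ (m n : ℕ) (_ : Fin (n + 1)),
      ((G.obj (op ⦋m⦌)) _⦋n⦌ ⟶ (H.obj (op ⦋m⦌)) _⦋n+1⦌))
    -- vertical homotopy identities
    (hv1 : ∀ (m n : ℕ),
      hv m n 0 ≫ (H.obj (op ⦋m⦌)).δ (0 : Fin (n + 2)) = (α.app (op ⦋m⦌)).app (op ⦋n⦌))
    (hv2 : ∀ (m n : ℕ),
      hv m n (Fin.last n) ≫ (H.obj (op ⦋m⦌)).δ (Fin.last (n + 1))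
        = (β.app (op ⦋m⦌)).app (op ⦋n⦌))
    (hv3 : ∀ (m n : ℕ) (i j : ℕ) (h1 : i < j) (h2 : j ≤ n + 1),
      hv m (n + 1) ⟨j, by omega⟩ ≫ (H.obj (op ⦋m⦌)).δ (⟨i, by omega⟩ : Fin (n + 3))
        = (G.obj (op ⦋m⦌)).δ (⟨i, by omega⟩ : Fin (n + 2)) ≫ hv m n ⟨j - 1, by omega⟩)
    (hv4 : ∀ (m n : ℕ) (i j : ℕ) (h1 : j + 1 < i) (h2 : i ≤ n + 2) (h3 : j ≤ n + 1),
      hv m (n + 1) ⟨j, by omega⟩ ≫ (H.obj (op ⦋m⦌)).δ (⟨i, by omega⟩ : Fin (n + 3))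
        = (G.obj (op ⦋m⦌)).δ (⟨i - 1, by omega⟩ : Fin (n + 2)) ≫ hv m n ⟨j, by omega⟩)
    (hv5 : ∀ (m n : ℕ) (j : ℕ) (h1 : j + 1 ≤ n),
      hv m n ⟨j + 1, by omega⟩ ≫ (H.obj (op ⦋m⦌)).δ (⟨j + 1, by omega⟩ : Fin (n + 2))
        = hv m n ⟨j, by omega⟩ ≫ (H.obj (op ⦋m⦌)).δ (⟨j + 1, by omega⟩ : Fin (n + 2)))
    -- the vertical homotopy commutes with the horizontal faces
    (hcomm : ∀ (m n : ℕ) (j : Fin (m + 2)) (i : Fin (n + 1)),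
      hv (m + 1) n i ≫ (H.δ j).app (op ⦋n+1⦌)
        = (G.δ j).app (op ⦋n⦌) ≫ hv m n i) :
    -- conclusion: `h'ᵢ := s^h_i ≫ h^v_i` is a simplicial homotopy between `Δα` and `Δβ`
    (∀ n : ℕ,
      ((G.σ (0 : Fin (n + 1))).app (op ⦋n⦌) ≫ hv (n + 1) n 0)
          ≫ ((H.obj (op ⦋n+1⦌)).δ (0 : Fin (n + 2)) ≫ (H.δ (0 : Fin (n + 2))).app (op ⦋n⦌))
        = (α.app (op ⦋n⦌)).app (op ⦋n⦌)) ∧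
    (∀ n : ℕ,
      ((G.σ (Fin.last n)).app (op ⦋n⦌) ≫ hv (n + 1) n (Fin.last n))
          ≫ ((H.obj (op ⦋n+1⦌)).δ (Fin.last (n + 1))
              ≫ (H.δ (Fin.last (n + 1))).app (op ⦋n⦌))
        = (β.app (op ⦋n⦌)).app (op ⦋n⦌)) ∧
    (∀ (n : ℕ) (i j : ℕ) (h1 : i < j) (h2 : j ≤ n + 1),
      ((G.σ (⟨j, by omega⟩ : Fin (n + 2))).app (op ⦋n+1⦌)
            ≫ hv (n + 2) (n + 1) ⟨j, by omega⟩)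
          ≫ ((H.obj (op ⦋n+2⦌)).δ (⟨i, by omega⟩ : Fin (n + 3))
              ≫ (H.δ (⟨i, by omega⟩ : Fin (n + 3))).app (op ⦋n+1⦌))
        = ((G.obj (op ⦋n+1⦌)).δ (⟨i, by omega⟩ : Fin (n + 2))
              ≫ (G.δ (⟨i, by omega⟩ : Fin (n + 2))).app (op ⦋n⦌))
            ≫ ((G.σ (⟨j - 1, by omega⟩ : Fin (n + 1))).app (op ⦋n⦌)
              ≫ hv (n + 1) n ⟨j - 1, by omega⟩)) ∧
    (∀ (n : ℕ) (i j : ℕ) (h1 : j + 1 < i) (h2 : i ≤ n + 2) (h3 : j ≤ n + 1),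
      ((G.σ (⟨j, by omega⟩ : Fin (n + 2))).app (op ⦋n+1⦌)
            ≫ hv (n + 2) (n + 1) ⟨j, by omega⟩)
          ≫ ((H.obj (op ⦋n+2⦌)).δ (⟨i, by omega⟩ : Fin (n + 3))
              ≫ (H.δ (⟨i, by omega⟩ : Fin (n + 3))).app (op ⦋n+1⦌))
        = ((G.obj (op ⦋n+1⦌)).δ (⟨i - 1, by omega⟩ : Fin (n + 2))
              ≫ (G.δ (⟨i - 1, by omega⟩ : Fin (n + 2))).app (op ⦋n⦌))
            ≫ ((G.σ (⟨j, by omega⟩ : Fin (n + 1))).app (op ⦋n⦌)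
              ≫ hv (n + 1) n ⟨j, by omega⟩)) ∧
    (∀ (n : ℕ) (j : ℕ) (h1 : j + 1 ≤ n),
      ((G.σ (⟨j + 1, by omega⟩ : Fin (n + 1))).app (op ⦋n⦌)
            ≫ hv (n + 1) n ⟨j + 1, by omega⟩)
          ≫ ((H.obj (op ⦋n+1⦌)).δ (⟨j + 1, by omega⟩ : Fin (n + 2))
              ≫ (H.δ (⟨j + 1, by omega⟩ : Fin (n + 2))).app (op ⦋n⦌))
        = ((G.σ (⟨j, by omega⟩ : Fin (n + 1))).app (op ⦋n⦌)
            ≫ hv (n + 1) n ⟨j, by omega⟩)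
          ≫ ((H.obj (op ⦋n+1⦌)).δ (⟨j + 1, by omega⟩ : Fin (n + 2))
              ≫ (H.δ (⟨j + 1, by omega⟩ : Fin (n + 2))).app (op ⦋n⦌))) := by
  refine ⟨?_, ?_, ?_, ?_, ?_⟩
  · -- first identity
    intro n
    have e2 : (G.σ (0 : Fin (n + 1))).app (op ⦋n⦌) ≫ (α.app (op ⦋n + 1⦌)).app (op ⦋n⦌)
        = (α.app (op ⦋n⦌)).app (op ⦋n⦌) ≫ (H.σ (0 : Fin (n + 1))).app (op ⦋n⦌) :=
      congrArg (fun φ => φ.app (op ⦋n⦌)) (SimplicialObject.σ_naturality α (0 : Fin (n + 1)))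
    have hid : (H.σ (0 : Fin (n + 1))).app (op ⦋n⦌) ≫ (H.δ (0 : Fin (n + 2))).app (op ⦋n⦌)
        = 𝟙 _ :=
      congrArg (fun φ => φ.app (op ⦋n⦌))
        (SimplicialObject.δ_comp_σ_self' (X := H) (i := (0 : Fin (n + 1)))
          Fin.castSucc_zero.symm)
    simp only [Category.assoc]
    rw [reassoc_of% (hv1 (n + 1) n), ← Category.assoc, e2, Category.assoc, hid,
      Category.comp_id]
  · -- second identity
    intro n
    have e2 : (G.σ (Fin.last n)).app (op ⦋n⦌) ≫ (β.app (op ⦋n + 1⦌)).app (op ⦋n⦌)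
        = (β.app (op ⦋n⦌)).app (op ⦋n⦌) ≫ (H.σ (Fin.last n)).app (op ⦋n⦌) :=
      congrArg (fun φ => φ.app (op ⦋n⦌)) (SimplicialObject.σ_naturality β (Fin.last n))
    have hid : (H.σ (Fin.last n)).app (op ⦋n⦌) ≫ (H.δ (Fin.last (n + 1))).app (op ⦋n⦌)
        = 𝟙 _ :=
      congrArg (fun φ => φ.app (op ⦋n⦌))
        (SimplicialObject.δ_comp_σ_succ' (X := H) (i := Fin.last n) (Fin.succ_last n).symm)
    simp only [Category.assoc]
    rw [reassoc_of% (hv2 (n + 1) n), ← Category.assoc, e2, Category.assoc, hid,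
      Category.comp_id]
  · -- third identity
    intro n i j h1 h2
    have A := hv3 (n + 2) n i j h1 h2
    have B : hv (n + 2) n ⟨j - 1, by omega⟩
          ≫ (H.δ (⟨i, by omega⟩ : Fin (n + 3))).app (op ⦋n + 1⦌)
        = (G.δ (⟨i, by omega⟩ : Fin (n + 3))).app (op ⦋n⦌) ≫ hv (n + 1) n ⟨j - 1, by omega⟩ :=
      hcomm (n + 1) n ⟨i, by omega⟩ ⟨j - 1, by omega⟩
    have C := SimplicialObject.δ_naturality
      (G.σ (⟨j, by omega⟩ : Fin (n + 2))) (⟨i, by omega⟩ : Fin (n + 2))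
    have hs : ((⟨j - 1, by omega⟩ : Fin (n + 1)).succ) = (⟨j, by omega⟩ : Fin (n + 2)) := by
      ext
      simp only [Fin.val_succ]
      omega
    have hc : Fin.castSucc (⟨i, by omega⟩ : Fin (n + 2)) = (⟨i, by omega⟩ : Fin (n + 3)) := by
      ext
      simp
    have D0 := SimplicialObject.δ_comp_σ_of_le (X := G)
      (i := (⟨i, by omega⟩ : Fin (n + 2))) (j := (⟨j - 1, by omega⟩ : Fin (n + 1)))
      (by simp only [Fin.le_def, Fin.castSucc_mk]; omega)
    simp only [Fin.castSucc_mk] at D0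
    rw [hs] at D0
    have D : (G.σ (⟨j, by omega⟩ : Fin (n + 2))).app (op ⦋n⦌)
          ≫ (G.δ (⟨i, by omega⟩ : Fin (n + 3))).app (op ⦋n⦌)
        = (G.δ (⟨i, by omega⟩ : Fin (n + 2))).app (op ⦋n⦌)
          ≫ (G.σ (⟨j - 1, by omega⟩ : Fin (n + 1))).app (op ⦋n⦌) :=
      congrArg (fun φ => φ.app (op ⦋n⦌)) D0
    simp only [Category.assoc]
    rw [reassoc_of% A, B, ← reassoc_of% C, reassoc_of% D]
  · -- fourth identity
    intro n i j h1 h2 h3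
    have A := hv4 (n + 2) n i j h1 h2 h3
    have B : hv (n + 2) n ⟨j, by omega⟩
          ≫ (H.δ (⟨i, by omega⟩ : Fin (n + 3))).app (op ⦋n + 1⦌)
        = (G.δ (⟨i, by omega⟩ : Fin (n + 3))).app (op ⦋n⦌) ≫ hv (n + 1) n ⟨j, by omega⟩ :=
      hcomm (n + 1) n ⟨i, by omega⟩ ⟨j, by omega⟩
    have C := SimplicialObject.δ_naturality
      (G.σ (⟨j, by omega⟩ : Fin (n + 2))) (⟨i - 1, by omega⟩ : Fin (n + 2))
    have hs : ((⟨i - 1, by omega⟩ : Fin (n + 2)).succ) = (⟨i, by omega⟩ : Fin (n + 3)) := by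
      ext
      simp only [Fin.val_succ]
      omega
    have hc : Fin.castSucc (⟨j, by omega⟩ : Fin (n + 1)) = (⟨j, by omega⟩ : Fin (n + 2)) := by
      ext
      simp
    have D0 := SimplicialObject.δ_comp_σ_of_gt (X := G)
      (i := (⟨i - 1, by omega⟩ : Fin (n + 2))) (j := (⟨j, by omega⟩ : Fin (n + 1)))
      (by simp only [Fin.lt_def, Fin.castSucc_mk]; omega)
    simp only [Fin.castSucc_mk] at D0
    rw [hs] at D0
    have D : (G.σ (⟨j, by omega⟩ : Fin (n + 2))).app (op ⦋n⦌)
          ≫ (G.δ (⟨i, by omega⟩ : Fin (n + 3))).app (op ⦋n⦌)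
        = (G.δ (⟨i - 1, by omega⟩ : Fin (n + 2))).app (op ⦋n⦌)
          ≫ (G.σ (⟨j, by omega⟩ : Fin (n + 1))).app (op ⦋n⦌) :=
      congrArg (fun φ => φ.app (op ⦋n⦌)) D0
    simp only [Category.assoc]
    rw [reassoc_of% A, B, ← reassoc_of% C, reassoc_of% D]
  · -- fifth identity
    intro n j h1
    have A := hv5 (n + 1) n j h1
    have B1 : hv (n + 1) n ⟨j, by omega⟩
          ≫ (H.δ (⟨j + 1, by omega⟩ : Fin (n + 2))).app (op ⦋n + 1⦌)
        = (G.δ (⟨j + 1, by omega⟩ : Fin (n + 2))).app (op ⦋n⦌) ≫ hv n n ⟨j, by omega⟩ :=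
      hcomm n n ⟨j + 1, by omega⟩ ⟨j, by omega⟩
    have C1 := SimplicialObject.δ_naturality
      (H.δ (⟨j + 1, by omega⟩ : Fin (n + 2))) (⟨j + 1, by omega⟩ : Fin (n + 2))
    have E1 : (G.σ (⟨j + 1, by omega⟩ : Fin (n + 1))).app (op ⦋n⦌)
          ≫ (G.δ (⟨j + 1, by omega⟩ : Fin (n + 2))).app (op ⦋n⦌) = 𝟙 _ :=
      congrArg (fun φ => φ.app (op ⦋n⦌))
        (SimplicialObject.δ_comp_σ_self' (X := G) (i := (⟨j + 1, by omega⟩ : Fin (n + 1)))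
          (j := (⟨j + 1, by omega⟩ : Fin (n + 2))) (by ext; simp))
    have E2 : (G.σ (⟨j, by omega⟩ : Fin (n + 1))).app (op ⦋n⦌)
          ≫ (G.δ (⟨j + 1, by omega⟩ : Fin (n + 2))).app (op ⦋n⦌) = 𝟙 _ :=
      congrArg (fun φ => φ.app (op ⦋n⦌))
        (SimplicialObject.δ_comp_σ_succ' (X := G) (i := (⟨j, by omega⟩ : Fin (n + 1)))
          (j := (⟨j + 1, by omega⟩ : Fin (n + 2))) (by ext; simp))
    simp only [Category.assoc]
    rw [reassoc_of% A, C1, reassoc_of% B1, reassoc_of% E1, reassoc_of% E2]
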